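/- arXiv:1002.0661 — 3 statements merged into one kernel-verified Lean document; each statement's English description precedes it below -/
import Mathlib

section
/- For every m ≥ 1, the join graph obtained from the disjoint union of an edgeless graph on 2 vertices and the complete graph K_{2m} by adding all edges between the two parts has property E(m-1,1). -/
set_option maxHeartbeats 1000000


/-- `M` is a matching of the simple graph `G`, given as a finite set of edges:
every edge of `M` is an edge of `G`, and distinct edges of `M` share no vertex. -/
def IsMatchingSet {V : Type*} (G : SimpleGraph V) (M : Finset (Sym2 V)) : Prop :=
  (∀ e ∈ M, e ∈ G.edgeSet) ∧
  ∀ e ∈ M, ∀ f ∈ M, e ≠ f → ∀ v : V, v ∈ e → v ∉ f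

/-- `F` is a perfect matching of `G`: a matching covering every vertex. -/
def IsPerfectMatchingSet {V : Type*} (G : SimpleGraph V) (F : Finset (Sym2 V)) : Prop :=
  IsMatchingSet G F ∧ ∀ v : V, ∃ e ∈ F, v ∈ e

/-- `G` has property `E(m,n)`: `G` is connected, has at least `2m+2n+2` vertices, and
for any two disjoint matchings `M`, `N` of sizes `m` and `n` respectively, there is a
perfect matching `F` with `M ⊆ F` and `N ∩ F = ∅`. -/
def PropE {V : Type*} [Fintype V] (G : SimpleGraph V) (m n : ℕ) : Prop :=
  G.Connected ∧ 2 * m + 2 * n + 2 ≤ Fintype.card V ∧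
  ∀ M N : Finset (Sym2 V), IsMatchingSet G M → IsMatchingSet G N →
    M.card = m → N.card = n → Disjoint M N →
    ∃ F : Finset (Sym2 V), IsPerfectMatchingSet G F ∧ M ⊆ F ∧ Disjoint N F

/-- The join of the edgeless graph on `2` vertices (the left summand `Fin 2`) with the
complete graph `K_{2m}` (the right summand `Fin (2*m)`): two vertices are adjacent iff
they are distinct and not both in the left part. -/
def JoinGraph (m : ℕ) : SimpleGraph (Fin 2 ⊕ Fin (2 * m)) where
  Adj a b := a ≠ b ∧ ¬(a.isLeft ∧ b.isLeft)
  symm := ⟨fun a b ⟨h1, h2⟩ => ⟨h1.symm, fun ⟨x, y⟩ => h2 ⟨y, x⟩⟩⟩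
  loopless := ⟨fun a h => h.1 rfl⟩

section Aux

variable {α : Type*} [DecidableEq α]

/-- The vertex set of a `Sym2` as a `Finset`. -/
def sym2Fin [Fintype α] (e : Sym2 α) : Finset α := Finset.univ.filter (· ∈ e)

lemma mem_sym2Fin [Fintype α] {e : Sym2 α} {v : α} : v ∈ sym2Fin e ↔ v ∈ e := by
  simp [sym2Fin]

lemma sym2Fin_card [Fintype α] {e : Sym2 α} (h : ¬ e.IsDiag) : (sym2Fin e).card = 2 := by
  induction e using Sym2.ind with
  | _ a b =>
    have hab : a ≠ b := by simpa [Sym2.mk_isDiag_iff] using h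
    have : sym2Fin s(a, b) = {a, b} := by
      ext v; simp [mem_sym2Fin, Sym2.mem_iff, Finset.mem_insert]
    rw [this, Finset.card_pair hab]

lemma card_eq_four {s : Finset α} (h : s.card = 4) :
    ∃ p q r t : α, p ≠ q ∧ p ≠ r ∧ p ≠ t ∧ q ≠ r ∧ q ≠ t ∧ r ≠ t ∧ s = {p, q, r, t} := by
  obtain ⟨p, u, hpu, rfl, hu⟩ := Finset.card_eq_succ.mp h
  obtain ⟨q, r, t, hqr, hqt, hrt, rfl⟩ := Finset.card_eq_three.mp hu
  refine ⟨p, q, r, t, ?_, ?_, ?_, hqr, hqt, hrt, rfl⟩ <;>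
    · rintro rfl; simp at hpu

lemma no_three_left {k : ℕ} {x y z : Fin 2 ⊕ Fin k} (hxy : x ≠ y) (hxz : x ≠ z) (hyz : y ≠ z)
    (hx : x.isLeft) (hy : y.isLeft) (hz : z.isLeft) : False := by
  rcases x with x | x <;> rcases y with y | y <;> rcases z with z | z <;> simp_all
  fin_cases x <;> fin_cases y <;> fin_cases z <;> simp_all

end Aux

lemma pick_pair {V : Type*} [DecidableEq V] (G : SimpleGraph V) (e0 : Sym2 V) (a b c d : V)
    (hab : a ≠ b) (hac : a ≠ c) (had : a ≠ d) (hbc : b ≠ c) (hbd : b ≠ d) (hcd : c ≠ d)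
    (h1 : G.Adj a c) (h2 : G.Adj b d) (h3 : G.Adj a d) (h4 : G.Adj b c) :
    ∃ x y z w : V, ({x, y, z, w} : Finset V) = {a, b, c, d} ∧
      x ≠ y ∧ x ≠ z ∧ x ≠ w ∧ y ≠ z ∧ y ≠ w ∧ z ≠ w ∧
      G.Adj x y ∧ G.Adj z w ∧ s(x, y) ≠ e0 ∧ s(z, w) ≠ e0 := by
  by_cases hc : s(a, c) = e0 ∨ s(b, d) = e0
  · refine ⟨a, d, b, c, ?_, had, hab, hac, hbd.symm, hcd.symm, hbc, h3, h4, ?_, ?_⟩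
    · ext v; simp only [Finset.mem_insert, Finset.mem_singleton]; tauto
    · rintro rfl
      rcases hc with hc | hc <;> rw [Sym2.eq_iff] at hc <;> tauto
    · rintro rfl
      rcases hc with hc | hc <;> rw [Sym2.eq_iff] at hc <;> tauto
  · push_neg at hc
    refine ⟨a, c, b, d, ?_, hac, hab, had, hbc.symm, hcd, hbd, h1, h2, hc.1, hc.2⟩
    ext v; simp only [Finset.mem_insert, Finset.mem_singleton]; tauto

lemma exists_good (m : ℕ) (e0 : Sym2 (Fin 2 ⊕ Fin (2 * m))) (p q r s : Fin 2 ⊕ Fin (2 * m))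
    (hpq : p ≠ q) (hpr : p ≠ r) (hps : p ≠ s) (hqr : q ≠ r) (hqs : q ≠ s) (hrs : r ≠ s) :
    ∃ x y z w : Fin 2 ⊕ Fin (2 * m), ({x, y, z, w} : Finset _) = {p, q, r, s} ∧
      x ≠ y ∧ x ≠ z ∧ x ≠ w ∧ y ≠ z ∧ y ≠ w ∧ z ≠ w ∧
      (JoinGraph m).Adj x y ∧ (JoinGraph m).Adj z w ∧ s(x, y) ≠ e0 ∧ s(z, w) ≠ e0 := by
  have adj : ∀ x y : Fin 2 ⊕ Fin (2 * m), x ≠ y → ¬(x.isLeft ∧ y.isLeft) →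
      (JoinGraph m).Adj x y := fun x y h1 h2 => ⟨h1, h2⟩
  by_cases h1 : p.isLeft ∧ q.isLeft
  · -- r, s not left
    have hr : ¬ r.isLeft := fun h => no_three_left hpq hpr hqr h1.1 h1.2 h
    have hs : ¬ s.isLeft := fun h => no_three_left hpq hps hqs h1.1 h1.2 h
    obtain ⟨x, y, z, w, hset, h⟩ := pick_pair (JoinGraph m) e0 p q r s hpq hpr hps hqr hqs hrs
      (adj _ _ hpr fun h => hr h.2) (adj _ _ hqs fun h => hs h.2)
      (adj _ _ hps fun h => hs h.2) (adj _ _ hqr fun h => hr h.2)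
    exact ⟨x, y, z, w, hset, h⟩
  by_cases h2 : r.isLeft ∧ s.isLeft
  · have hp : ¬ p.isLeft := fun h => no_three_left hrs hpr.symm hps.symm h2.1 h2.2 h
    have hq : ¬ q.isLeft := fun h => no_three_left hrs hqr.symm hqs.symm h2.1 h2.2 h
    obtain ⟨x, y, z, w, hset, h⟩ := pick_pair (JoinGraph m) e0 p q r s hpq hpr hps hqr hqs hrs
      (adj _ _ hpr fun h => hp h.1) (adj _ _ hqs fun h => hq h.1)
      (adj _ _ hps fun h => hp h.1) (adj _ _ hqr fun h => hq h.1)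
    exact ⟨x, y, z, w, hset, h⟩
  by_cases h3 : p.isLeft ∧ r.isLeft
  · have hq : ¬ q.isLeft := fun h => no_three_left hpr hpq hqr.symm h3.1 h3.2 h
    have hs : ¬ s.isLeft := fun h => no_three_left hpr hps hrs h3.1 h3.2 h
    obtain ⟨x, y, z, w, hset, h⟩ := pick_pair (JoinGraph m) e0 p r q s hpr hpq hps hqr.symm hrs hqs
      (adj _ _ hpq fun h => hq h.2) (adj _ _ hrs fun h => hs h.2)
      (adj _ _ hps fun h => hs h.2) (adj _ _ hqr.symm fun h => hq h.2)
    refine ⟨x, y, z, w, ?_, h⟩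
    rw [hset]; ext v; simp only [Finset.mem_insert, Finset.mem_singleton]; tauto
  by_cases h4 : q.isLeft ∧ s.isLeft
  · have hp : ¬ p.isLeft := fun h => no_three_left hqs hpq.symm hps.symm h4.1 h4.2 h
    have hr : ¬ r.isLeft := fun h => no_three_left hqs hqr hrs.symm h4.1 h4.2 h
    obtain ⟨x, y, z, w, hset, h⟩ := pick_pair (JoinGraph m) e0 p r q s hpr hpq hps hqr.symm hrs hqs
      (adj _ _ hpq fun h => hp h.1) (adj _ _ hrs fun h => hr h.1)
      (adj _ _ hps fun h => hp h.1) (adj _ _ hqr.symm fun h => hr h.1)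
    refine ⟨x, y, z, w, ?_, h⟩
    rw [hset]; ext v; simp only [Finset.mem_insert, Finset.mem_singleton]; tauto
  by_cases h5 : p.isLeft ∧ s.isLeft
  · have hq : ¬ q.isLeft := fun h => no_three_left hps hpq hqs.symm h5.1 h5.2 h
    have hr : ¬ r.isLeft := fun h => no_three_left hps hpr hrs.symm h5.1 h5.2 h
    obtain ⟨x, y, z, w, hset, h⟩ := pick_pair (JoinGraph m) e0 p s q r hps hpq hpr hqs.symm hrs.symm hqr
      (adj _ _ hpq fun h => hq h.2) (adj _ _ hrs.symm fun h => hr h.2)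
      (adj _ _ hpr fun h => hr h.2) (adj _ _ hqs.symm fun h => hq h.2)
    refine ⟨x, y, z, w, ?_, h⟩
    rw [hset]; ext v; simp only [Finset.mem_insert, Finset.mem_singleton]; tauto
  by_cases h6 : q.isLeft ∧ r.isLeft
  · have hp : ¬ p.isLeft := fun h => no_three_left hqr hpq.symm hpr.symm h6.1 h6.2 h
    have hs : ¬ s.isLeft := fun h => no_three_left hqr hqs hrs h6.1 h6.2 h
    obtain ⟨x, y, z, w, hset, h⟩ := pick_pair (JoinGraph m) e0 p s q r hps hpq hpr hqs.symm hrs.symm hqr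
      (adj _ _ hpq fun h => hp h.1) (adj _ _ hrs.symm fun h => hs h.1)
      (adj _ _ hpr fun h => hp h.1) (adj _ _ hqs.symm fun h => hs h.1)
    refine ⟨x, y, z, w, ?_, h⟩
    rw [hset]; ext v; simp only [Finset.mem_insert, Finset.mem_singleton]; tauto
  · obtain ⟨x, y, z, w, hset, h⟩ := pick_pair (JoinGraph m) e0 p q r s hpq hpr hps hqr hqs hrs
      (adj _ _ hpr h3) (adj _ _ hqs h4) (adj _ _ hps h5) (adj _ _ hqr h6)
    exact ⟨x, y, z, w, hset, h⟩


/-- For every `m ≥ 1`, the join of the edgeless graph on two vertices with `K_{2m}`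
has property `E(m-1, 1)`. -/
theorem joinGraph_propE (m : ℕ) (hm : 1 ≤ m) : PropE (JoinGraph m) (m - 1) 1 := by
  have hcardV : Fintype.card (Fin 2 ⊕ Fin (2 * m)) = 2 + 2 * m := by simp
  refine ⟨?_, by omega, ?_⟩
  · -- connectivity
    have hm0 : 0 < 2 * m := by omega
    let v0 : Fin 2 ⊕ Fin (2 * m) := Sum.inr ⟨0, hm0⟩
    have hadjw : ∀ a, a ≠ v0 → (JoinGraph m).Adj a v0 := by
      rintro a h
      exact ⟨h, by rintro ⟨-, h2⟩; simp [v0] at h2⟩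
    have hreach : ∀ a, (JoinGraph m).Reachable a v0 := by
      intro a
      by_cases h : a = v0
      · rw [h]
      · exact (hadjw a h).reachable
    exact ⟨fun a b => (hreach a).trans (hreach b).symm⟩
  · intro M N hM hN hMc hNc hMN
    obtain ⟨e0, rfl⟩ := Finset.card_eq_one.mp hNc
    classical
    set S : Finset (Fin 2 ⊕ Fin (2 * m)) := M.biUnion sym2Fin with hSdef
    have hdisjS : ∀ e ∈ M, ∀ f ∈ M, e ≠ f → Disjoint (sym2Fin e) (sym2Fin f) := by
      intro e he f hf hef
      exact Finset.disjoint_left.mpr fun v hv hvf =>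
        hM.2 e he f hf hef v (mem_sym2Fin.mp hv) (mem_sym2Fin.mp hvf)
    have hScard : S.card = (m - 1) * 2 := by
      rw [hSdef, Finset.card_biUnion hdisjS, ← hMc]
      exact Finset.sum_const_nat fun e he =>
        sym2Fin_card (SimpleGraph.not_isDiag_of_mem_edgeSet _ (hM.1 e he))
    have hUcard : Sᶜ.card = 4 := by
      rw [Finset.card_compl, hScard, hcardV]; omega
    obtain ⟨p, q, r, s, hpq, hpr, hps, hqr, hqs, hrs, hUeq⟩ := card_eq_four hUcard
    have hmem : ∀ v ∈ ({p, q, r, s} : Finset (Fin 2 ⊕ Fin (2 * m))), ∀ f ∈ M, v ∉ f := by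
      intro v hv f hf hvf
      have hv' : v ∈ Sᶜ := hUeq ▸ hv
      exact Finset.mem_compl.mp hv' (Finset.mem_biUnion.mpr ⟨f, hf, mem_sym2Fin.mpr hvf⟩)
    obtain ⟨x, y, z, w, hset, hxy, hxz, hxw, hyz, hyw, hzw, haxy, hazw, hexy, hezw⟩ :=
      exists_good m e0 p q r s hpq hpr hps hqr hqs hrs
    have hx : ∀ f ∈ M, x ∉ f := hmem x (hset ▸ (by simp)) 
    have hy : ∀ f ∈ M, y ∉ f := hmem y (hset ▸ (by simp))
    have hz : ∀ f ∈ M, z ∉ f := hmem z (hset ▸ (by simp))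
    have hw : ∀ f ∈ M, w ∉ f := hmem w (hset ▸ (by simp))
    have he0M : e0 ∉ M := fun h => (Finset.disjoint_left.mp hMN h) (Finset.mem_singleton_self e0)
    refine ⟨insert s(x, y) (insert s(z, w) M), ⟨⟨?_, ?_⟩, ?_⟩, ?_, ?_⟩
    · intro e he
      rcases Finset.mem_insert.mp he with rfl | he
      · exact (JoinGraph m).mem_edgeSet.mpr haxy
      rcases Finset.mem_insert.mp he with rfl | he
      · exact (JoinGraph m).mem_edgeSet.mpr hazw
      · exact hM.1 e he
    · intro e he f hf hef v hve hvf
      simp only [Finset.mem_insert] at he hf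
      rcases he with rfl | rfl | he <;> rcases hf with rfl | rfl | hf
      · exact hef rfl
      · rw [Sym2.mem_iff] at hve hvf
        rcases hve with rfl | rfl <;> rcases hvf with rfl | rfl <;> simp_all
      · rw [Sym2.mem_iff] at hve
        rcases hve with rfl | rfl
        · exact hx f hf hvf
        · exact hy f hf hvf
      · rw [Sym2.mem_iff] at hve hvf
        rcases hve with rfl | rfl <;> rcases hvf with rfl | rfl <;> simp_all
      · exact hef rfl
      · rw [Sym2.mem_iff] at hve
        rcases hve with rfl | rfl
        · exact hz f hf hvf
        · exact hw f hf hvf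
      · rw [Sym2.mem_iff] at hvf
        rcases hvf with rfl | rfl
        · exact hx e he hve
        · exact hy e he hve
      · rw [Sym2.mem_iff] at hvf
        rcases hvf with rfl | rfl
        · exact hz e he hve
        · exact hw e he hve
      · exact hM.2 e he f hf hef v hve hvf
    · intro v
      by_cases hv : v ∈ S
      · obtain ⟨f, hf, hvf⟩ := Finset.mem_biUnion.mp hv
        exact ⟨f, by simp [hf], mem_sym2Fin.mp hvf⟩
      · have hv' : v ∈ ({x, y, z, w} : Finset (Fin 2 ⊕ Fin (2 * m))) := by
          rw [hset, ← hUeq]; exact Finset.mem_compl.mpr hv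
        simp only [Finset.mem_insert, Finset.mem_singleton] at hv'
        rcases hv' with h | h | h | h
        · exact ⟨s(x, y), by simp, by rw [h]; simp⟩
        · exact ⟨s(x, y), by simp, by rw [h]; simp⟩
        · exact ⟨s(z, w), by simp, by rw [h]; simp⟩
        · exact ⟨s(z, w), by simp, by rw [h]; simp⟩
    · exact (Finset.subset_insert _ M).trans (Finset.subset_insert _ _)
    · refine Finset.disjoint_left.mpr ?_
      intro a ha
      rw [Finset.mem_singleton] at ha
      subst ha
      simp only [Finset.mem_insert, not_or]
      exact ⟨fun h => hexy h.symm, fun h => hezw h.symm, he0M⟩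
end

section
/- For every m ≥ 1, the join graph obtained from the disjoint union of an edgeless graph on 2 vertices and the complete graph K_{2m} by adding all edges between the two parts is not m-extendable; that is, it does not have property E(m,0). -/
/-- `G` is `m`-extendable (has property `E(m,0)`): `G` is connected, has at least
`2m+2` vertices, and every matching of size `m` is contained in a perfect matching. -/
def MExtendable {V : Type*} [Fintype V] (G : SimpleGraph V) (m : ℕ) : Prop :=
  G.Connected ∧ 2 * m + 2 ≤ Fintype.card V ∧
  ∀ M : Finset (Sym2 V), IsMatchingSet G M → M.card = m →
    ∃ F : Finset (Sym2 V), IsPerfectMatchingSet G F ∧ M ⊆ F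

/-- The edge pairing vertices `2i` and `2i+1` in the right part. -/
def mEdge (m : ℕ) (i : Fin m) : Sym2 (Fin 2 ⊕ Fin (2 * m)) :=
  s(Sum.inr ⟨2 * i.val, by have := i.2; omega⟩, Sum.inr ⟨2 * i.val + 1, by have := i.2; omega⟩)

/-- For every `m ≥ 1`, the join of the edgeless graph on two vertices with `K_{2m}`
is not `m`-extendable, i.e. does not have property `E(m,0)`. -/
theorem joinGraph_not_mExtendable (m : ℕ) (hm : 1 ≤ m) : ¬ MExtendable (JoinGraph m) m := by
  rintro ⟨-, -, hext⟩
  set V := Fin 2 ⊕ Fin (2 * m) with hV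
  set f : Fin m → Sym2 V := mEdge m with hf
  have hfinj : Function.Injective f := by
    intro a b h
    simp only [hf, mEdge, Sym2.eq, Sym2.rel_iff', Prod.mk.injEq, Prod.swap_prod_mk,
      Sum.inr.injEq, Fin.mk.injEq] at h
    ext
    omega
  set M : Finset (Sym2 V) := Finset.univ.image f with hM
  have hMcard : M.card = m := by
    rw [hM, Finset.card_image_of_injective _ hfinj, Finset.card_univ, Fintype.card_fin]
  have hmem : ∀ e ∈ M, ∃ i : Fin m, e = f i := by
    intro e he
    rw [hM, Finset.mem_image] at he
    obtain ⟨i, -, hi⟩ := he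
    exact ⟨i, hi.symm⟩
  have hMmatch : IsMatchingSet (JoinGraph m) M := by
    constructor
    · intro e he
      obtain ⟨i, rfl⟩ := hmem e he
      simp only [hf, mEdge, SimpleGraph.mem_edgeSet, JoinGraph, ne_eq, Sum.inr.injEq, Fin.mk.injEq]
      constructor
      · omega
      · simp
    · intro e he e' he' hne v hv hv'
      obtain ⟨i, rfl⟩ := hmem e he
      obtain ⟨j, rfl⟩ := hmem e' he'
      have hij : i ≠ j := fun h => hne (by rw [h])
      simp only [hf, mEdge, Sym2.mem_iff] at hv hv'
      have : i.val ≠ j.val := fun h => hij (Fin.ext h)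
      rcases hv with h1 | h1 <;> rcases hv' with h2 | h2 <;>
        (rw [h1] at h2; simp only [Sum.inr.injEq, Fin.mk.injEq] at h2; omega)
  obtain ⟨F, ⟨⟨hFedge, hFdisj⟩, hFcov⟩, hMF⟩ := hext M hMmatch hMcard
  -- the vertex inl 0 is covered by some edge of F
  obtain ⟨e, heF, hve⟩ := hFcov (Sum.inl 0)
  -- the other endpoint of e is some inr j
  have heE := hFedge e heF
  induction e using Sym2.inductionOn with
  | hf a b =>
    rw [SimpleGraph.mem_edgeSet] at heE
    obtain ⟨hab, hnl⟩ := heE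
    simp only [Sym2.mem_iff] at hve
    -- get a right vertex w ∈ s(a,b) with the edge containing inl 0
    obtain ⟨j, hj⟩ : ∃ j : Fin (2 * m), (Sum.inr j = a ∨ Sum.inr j = b) := by
      rcases hve with rfl | rfl
      · rcases b with b | b
        · simp at hnl
        · exact ⟨b, Or.inr rfl⟩
      · rcases a with a | a
        · simp at hnl
        · exact ⟨a, Or.inl rfl⟩
    -- the edge of M covering inr j
    have hjlt : j.val / 2 < m := by omega
    have hjmem : (Sum.inr j : V) ∈ f ⟨j.val / 2, hjlt⟩ := by
      simp only [hf, mEdge, Sym2.mem_iff, Sum.inr.injEq, Fin.ext_iff]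
      omega
    have hfF : f ⟨j.val / 2, hjlt⟩ ∈ F := hMF (by rw [hM]; exact Finset.mem_image_of_mem f (Finset.mem_univ _))
    have hne : s(a, b) ≠ f ⟨j.val / 2, hjlt⟩ := by
      intro h
      have : (Sum.inl 0 : V) ∈ f ⟨j.val / 2, hjlt⟩ := by
        rw [← h]; simp only [Sym2.mem_iff]; exact hve
      simp only [hf, mEdge, Sym2.mem_iff] at this
      rcases this with h' | h' <;> exact Sum.inl_ne_inr h'
    exact hFdisj _ heF _ hfF hne (Sum.inr j) (by simp only [Sym2.mem_iff]; tauto) hjmem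
end

section
/- Let G be a simple graph, let m ≥ 1, and suppose G contains a vertex v of degree 2m+1 such that the subgraph of G induced by the neighborhood N(v) contains a matching of size m. Then G does not have property E(m,1). (Indeed, if M is a matching of size m contained in G[N(v)] and v' is the unique neighbor of v not covered by M, then no perfect matching F of G satisfies M ⊆ F and vv' ∉ F.) -/
/-- Let `G` contain a vertex `v` of degree `2m+1` (`m ≥ 1`) such that `G[N(v)]`
contains a matching `M` of size `m`.  Then no perfect matching `F` of `G` satisfies
`M ⊆ F` and `vv' ∉ F`, where `v'` is any neighbor of `v` not covered by `M`
(there is exactly one such neighbor); in particular `G` does not have property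
`E(m,1)`. -/
theorem not_propE_of_matching_in_neighborhood
    {V : Type*} [Fintype V] (G : SimpleGraph V) [DecidableRel G.Adj]
    (m : ℕ) (hm : 1 ≤ m) (v : V) (hdeg : G.degree v = 2 * m + 1)
    (M : Finset (Sym2 V)) (hM : IsMatchingSet G M) (hMcard : M.card = m)
    (hMnbr : ∀ e ∈ M, ∀ w ∈ e, G.Adj v w) :
    (∀ v' : V, G.Adj v v' → (∀ e ∈ M, v' ∉ e) →
      ¬ ∃ F : Finset (Sym2 V), IsPerfectMatchingSet G F ∧ M ⊆ F ∧ s(v, v') ∉ F) ∧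
    ¬ PropE G m 1 := by
  classical
  set S : Finset V := M.biUnion (fun e => Finset.univ.filter (· ∈ e)) with hS
  have hmemS : ∀ w : V, w ∈ S ↔ ∃ e ∈ M, w ∈ e := by
    intro w; simp [hS]
  have hSsub : S ⊆ G.neighborFinset v := by
    intro w hw
    rw [hmemS] at hw
    obtain ⟨e, he, hwe⟩ := hw
    rw [SimpleGraph.mem_neighborFinset]
    exact hMnbr e he w hwe
  have hScard : S.card = 2 * m := by
    rw [hS, Finset.card_biUnion]
    · have h2 : ∀ e ∈ M, (Finset.univ.filter (· ∈ e)).card = 2 := by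
        intro e he
        induction e using Sym2.ind with
        | _ a b =>
          have hab : G.Adj a b := (SimpleGraph.mem_edgeSet G).mp (hM.1 _ he)
          have : Finset.univ.filter (· ∈ s(a, b)) = {a, b} := by
            ext w; simp [Sym2.mem_iff]
          rw [this, Finset.card_insert_of_notMem (by simp [hab.ne]),
            Finset.card_singleton]
      rw [Finset.sum_congr rfl h2, Finset.sum_const, hMcard]
      ring
    · intro e he f hf hne
      rw [Function.onFun, Finset.disjoint_left]
      intro w hw hw'
      simp only [Finset.mem_filter] at hw hw'
      exact hM.2 e he f hf hne w hw.2 hw'.2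
  have hsd : (G.neighborFinset v \ S).card = 1 := by
    rw [Finset.card_sdiff_of_subset hSsub, hScard, SimpleGraph.card_neighborFinset_eq_degree, hdeg]
    omega
  have part1 : ∀ v' : V, G.Adj v v' → (∀ e ∈ M, v' ∉ e) →
      ¬ ∃ F : Finset (Sym2 V), IsPerfectMatchingSet G F ∧ M ⊆ F ∧ s(v, v') ∉ F := by
    rintro v' hadj hv'M ⟨F, hF, hMF, hvv'⟩
    obtain ⟨e, heF, hve⟩ := hF.2 v
    obtain ⟨w, rfl⟩ := (Sym2.mem_iff_exists).mp hve
    have hwadj : G.Adj v w := (SimpleGraph.mem_edgeSet G).mp (hF.1.1 _ heF)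
    have hwne : w ≠ v' := by
      rintro rfl; exact hvv' heF
    have hwS : w ∉ S := by
      rw [hmemS]
      rintro ⟨f, hf, hwf⟩
      have hvf : v ∉ f := fun hv => G.irrefl (hMnbr f hf v hv)
      have hne : s(v, w) ≠ f := fun h => hvf (h ▸ Sym2.mem_mk_left v w)
      exact hF.1.2 _ heF f (hMF hf) hne w (Sym2.mem_mk_right v w) hwf
    have hv'S : v' ∉ S := by
      rw [hmemS]; rintro ⟨f, hf, hvf⟩; exact hv'M f hf hvf
    have hwmem : w ∈ G.neighborFinset v \ S :=
      Finset.mem_sdiff.mpr ⟨(SimpleGraph.mem_neighborFinset G v w).mpr hwadj, hwS⟩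
    have hv'mem : v' ∈ G.neighborFinset v \ S :=
      Finset.mem_sdiff.mpr ⟨(SimpleGraph.mem_neighborFinset G v v').mpr hadj, hv'S⟩
    exact hwne (Finset.card_le_one.mp (le_of_eq hsd) w hwmem v' hv'mem)
  refine ⟨part1, ?_⟩
  rintro ⟨-, -, h⟩
  obtain ⟨v', hv'mem⟩ := Finset.card_pos.mp (by omega : 0 < (G.neighborFinset v \ S).card)
  obtain ⟨hv'N, hv'S⟩ := Finset.mem_sdiff.mp hv'mem
  have hadj : G.Adj v v' := (SimpleGraph.mem_neighborFinset G v v').mp hv'N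
  have hv'M : ∀ e ∈ M, v' ∉ e := by
    intro e he hv'e
    exact hv'S ((hmemS v').mpr ⟨e, he, hv'e⟩)
  have hnotM : s(v, v') ∉ M := fun h => G.irrefl (hMnbr _ h v (Sym2.mem_mk_left v v'))
  obtain ⟨F, hF, hMF, hdisj⟩ := h M {s(v, v')}
    hM
    ⟨fun e he => by
        rw [Finset.mem_singleton] at he
        exact he ▸ (SimpleGraph.mem_edgeSet G).mpr hadj,
      fun e he f hf hne => by
        rw [Finset.mem_singleton] at he hf
        exact absurd (he.trans hf.symm) hne⟩
    hMcard (Finset.card_singleton _)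
    (Finset.disjoint_singleton_right.mpr hnotM)
  exact part1 v' hadj hv'M ⟨F, hF, hMF, Finset.disjoint_singleton_left.mp hdisj⟩
end
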